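/- (Closed form of the mirror step for ω(x) = ‖x‖₂^{r+2}/(r+2) + ‖x‖₂²/2.) Fix r > 0 and c ∈ ℝ^d. Then the equation (1 + ‖x‖₂^r)·x = c (i.e. ∇ω(x) = c) has a unique solution x ∈ ℝ^d, given by x = c/(1 + θ*^r), where θ* ≥ 0 is the unique nonnegative real solution of the scalar equation θ^{r+1} + θ = ‖c‖₂. -/
import Mathlib

/-- Euclidean space `ℝ^d`. -/
abbrev Euc (d : ℕ) := EuclideanSpace ℝ (Fin d)

lemma factor_aux (rexp θ : ℝ) (hrexp : 0 < rexp) (hθ : 0 ≤ θ) :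
    θ ^ (rexp + 1) + θ = (1 + θ ^ rexp) * θ := by
  rcases eq_or_lt_of_le hθ with h | h
  · rw [← h]
    rw [Real.zero_rpow (by linarith)]
    ring
  · rw [Real.rpow_add h, Real.rpow_one]
    ring

lemma mono_aux (rexp : ℝ) (hrexp : 0 < rexp) :
    StrictMonoOn (fun θ : ℝ => θ ^ (rexp + 1) + θ) (Set.Ici 0) := by
  intro a ha b hb hab
  have : a ^ (rexp + 1) < b ^ (rexp + 1) :=
    Real.rpow_lt_rpow ha hab (by linarith)
  dsimp
  linarith

theorem mirror_step_closed_form {d : ℕ} (rexp : ℝ) (hrexp : 0 < rexp) (c : Euc d) :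
    (∃! θ : ℝ, 0 ≤ θ ∧ θ ^ (rexp + 1) + θ = ‖c‖) ∧
    ∀ θ : ℝ, 0 ≤ θ → θ ^ (rexp + 1) + θ = ‖c‖ →
      (∃! x : Euc d, (1 + ‖x‖ ^ rexp) • x = c) ∧
      (1 + ‖(1 + θ ^ rexp)⁻¹ • c‖ ^ rexp) • ((1 + θ ^ rexp)⁻¹ • c) = c := by
  have hcont : Continuous fun θ : ℝ => θ ^ (rexp + 1) + θ := by
    refine Continuous.add ?_ continuous_id
    exact continuous_iff_continuousAt.mpr fun x =>
      Real.continuousAt_rpow_const x _ (Or.inr (by linarith))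
  have hc0 : (0:ℝ) ≤ ‖c‖ := norm_nonneg c
  -- existence via IVT on [0, ‖c‖]
  have h0 : (fun θ : ℝ => θ ^ (rexp + 1) + θ) 0 = 0 := by
    simp [Real.zero_rpow (show rexp + 1 ≠ 0 by linarith)]
  have hM : ‖c‖ ≤ (fun θ : ℝ => θ ^ (rexp + 1) + θ) ‖c‖ := by
    have : 0 ≤ ‖c‖ ^ (rexp + 1) := Real.rpow_nonneg hc0 _
    dsimp; linarith
  have hiv := intermediate_value_Icc hc0 hcont.continuousOn
  have hmem : ‖c‖ ∈ Set.Icc ((fun θ : ℝ => θ ^ (rexp + 1) + θ) 0)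
      ((fun θ : ℝ => θ ^ (rexp + 1) + θ) ‖c‖) := ⟨by rw [h0]; exact hc0, hM⟩
  obtain ⟨θ₀, hθ₀mem, hθ₀⟩ := hiv hmem
  have huniq : ∀ a b : ℝ, 0 ≤ a → 0 ≤ b → a ^ (rexp + 1) + a = b ^ (rexp + 1) + b → a = b := by
    intro a b ha hb hab
    exact (mono_aux rexp hrexp).injOn ha hb hab
  constructor
  · refine ⟨θ₀, ⟨hθ₀mem.1, hθ₀⟩, ?_⟩
    rintro y ⟨hy0, hy⟩
    exact huniq y θ₀ hy0 hθ₀mem.1 (by rw [hy]; exact hθ₀.symm)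
  · intro θ hθ0 hθ
    have hpos : (0:ℝ) < 1 + θ ^ rexp := by
      have := Real.rpow_nonneg hθ0 rexp; linarith
    set x₀ : Euc d := (1 + θ ^ rexp)⁻¹ • c with hx₀
    have hnx₀ : ‖x₀‖ = θ := by
      rw [hx₀, norm_smul, Real.norm_eq_abs, abs_of_pos (inv_pos.mpr hpos), ← hθ,
        factor_aux rexp θ hrexp hθ0]
      field_simp
    have hx₀eq : (1 + ‖x₀‖ ^ rexp) • x₀ = c := by
      rw [hnx₀, hx₀, smul_smul, mul_inv_cancel₀ (ne_of_gt hpos), one_smul]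
    refine ⟨⟨x₀, hx₀eq, ?_⟩, hx₀eq⟩
    intro y hy
    -- norm of both sides
    have hny : ‖y‖ ^ (rexp + 1) + ‖y‖ = ‖c‖ := by
      have := congrArg norm hy
      rw [norm_smul, Real.norm_eq_abs] at this
      have hpy : (0:ℝ) < 1 + ‖y‖ ^ rexp := by
        have := Real.rpow_nonneg (norm_nonneg y) rexp; linarith
      rw [abs_of_pos hpy] at this
      rw [factor_aux rexp ‖y‖ hrexp (norm_nonneg y)]
      exact this
    have hyθ : ‖y‖ = θ := huniq ‖y‖ θ (norm_nonneg y) hθ0 (by rw [hny, hθ])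
    rw [hyθ] at hy
    rw [hx₀, ← hy, smul_smul, inv_mul_cancel₀ (ne_of_gt hpos), one_smul]
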